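/- Let n ≥ 1 and let p ∈ ℂ[x₁,…,xₙ] be a nonconstant polynomial whose zero set V(p) is allowable. Then p factors as p = c · ∏_j p_j, where c is a nonzero complex constant and each p_j is a power of one of the linear forms x_i, x_i − x_j, or x_i + x_j. -/

import Mathlib

namespace Stmt3Aux
open MvPolynomial

def Good (n : ℕ) (ℓ : MvPolynomial (Fin n) ℂ) : Prop :=
  (∃ i, ℓ = X i) ∨ (∃ i j, i ≠ j ∧ ℓ = X i - X j) ∨ (∃ i j, i ≠ j ∧ ℓ = X i + X j)

lemma unit_eq_C : ∀ (n : ℕ) (u : MvPolynomial (Fin n) ℂ), IsUnit u → ∃ c : ℂ, c ≠ 0 ∧ u = C c := by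
  intro n
  induction n with
  | zero =>
    intro u hu
    obtain ⟨c, rfl⟩ := (C_surjective (Fin 0)) u
    refine ⟨c, ?_, rfl⟩
    rintro rfl
    simp only [map_zero] at hu
    exact hu.ne_zero rfl
  | succ m ih =>
    intro u hu
    have h2 := hu.map (finSuccEquiv ℂ m)
    rw [Polynomial.isUnit_iff] at h2
    obtain ⟨r, hr, hru⟩ := h2
    obtain ⟨c, hc, rfl⟩ := ih r hr
    refine ⟨c, hc, ?_⟩
    apply (finSuccEquiv ℂ m).injective
    rw [← hru]
    simp [finSuccEquiv_apply]

lemma prime_X' {n : ℕ} (i : Fin n) : Prime (X i : MvPolynomial (Fin n) ℂ) := by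
  cases n with
  | zero => exact i.elim0
  | succ m =>
    let e := (renameEquiv ℂ (Equiv.swap i 0)).trans (finSuccEquiv ℂ m)
    have key : Prime (e (X i)) := by
      have : e (X i) = Polynomial.X := by
        simp [e, renameEquiv_apply, rename_X, Equiv.swap_apply_left, finSuccEquiv_X_zero]
      rw [this]; exact Polynomial.prime_X
    exact (MulEquiv.prime_iff (p := X i) e.toMulEquiv).mp key

lemma prime_lin {n : ℕ} {i j : Fin n} (h : i ≠ j) (c : ℂ) :
    Prime (X i + C c * X j : MvPolynomial (Fin n) ℂ) := by
  let F : MvPolynomial (Fin n) ℂ →ₐ[ℂ] MvPolynomial (Fin n) ℂ :=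
    aeval (fun k => if k = i then X i + C c * X j else X k)
  let G : MvPolynomial (Fin n) ℂ →ₐ[ℂ] MvPolynomial (Fin n) ℂ :=
    aeval (fun k => if k = i then X i - C c * X j else X k)
  have hFG : F.comp G = AlgHom.id ℂ _ := by
    apply algHom_ext; intro k
    by_cases hk : k = i
    · subst hk
      simp [F, G, Ne.symm h, algebraMap_eq]
    · simp [F, G, hk]
  have hGF : G.comp F = AlgHom.id ℂ _ := by
    apply algHom_ext; intro k
    by_cases hk : k = i
    · subst hk
      simp [F, G, Ne.symm h, algebraMap_eq]
    · simp [F, G, hk]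
  let e : MvPolynomial (Fin n) ℂ ≃ₐ[ℂ] MvPolynomial (Fin n) ℂ := AlgEquiv.ofAlgHom F G hFG hGF
  have key := (MulEquiv.prime_iff (p := (X i : MvPolynomial (Fin n) ℂ)) e.toMulEquiv).mpr (prime_X' i)
  have he : e (X i) = X i + C c * X j := by
    simp [e, F, AlgEquiv.ofAlgHom]
  rwa [show e.toMulEquiv (X i) = e (X i) from rfl, he] at key

lemma good_prime {n : ℕ} {ℓ : MvPolynomial (Fin n) ℂ} (hg : Good n ℓ) : Prime ℓ := by
  rcases hg with ⟨i, rfl⟩ | ⟨i, j, hij, rfl⟩ | ⟨i, j, hij, rfl⟩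
  · exact prime_X' i
  · have h := prime_lin hij (-1 : ℂ)
    rw [map_neg, map_one] at h
    rwa [show (X i + (-1 : MvPolynomial (Fin n) ℂ) * X j) = X i - X j by ring] at h
  · have h := prime_lin hij (1 : ℂ)
    rwa [map_one, one_mul] at h

lemma factor_lemma {n : ℕ} (p : MvPolynomial (Fin n) ℂ) (hp : p ≠ 0)
    (h : ∀ a : MvPolynomial (Fin n) ℂ, Prime a → a ∣ p →
      ∃ ℓ, Good n ℓ ∧ Associated a ℓ) :
    ∃ c : ℂ, c ≠ 0 ∧ ∃ (r : ℕ) (f : Fin r → MvPolynomial (Fin n) ℂ),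
      (∀ t, Good n (f t)) ∧ p = C c * ∏ t, f t := by
  revert hp h
  refine UniqueFactorizationMonoid.induction_on_prime p ?_ ?_ ?_
  · intro hp _; exact absurd rfl hp
  · intro x hx _ _
    obtain ⟨c, hc, rfl⟩ := unit_eq_C n x hx
    exact ⟨c, hc, 0, Fin.elim0, fun t => t.elim0, by simp⟩
  · intro a q ha hq ih hpa h
    have ha' : ∀ b : MvPolynomial (Fin n) ℂ, Prime b → b ∣ a →
        ∃ ℓ, Good n ℓ ∧ Associated b ℓ := fun b hb hba =>
      h b hb (hba.mul_left q)
    obtain ⟨c, hc, r, f, hf, rfl⟩ := ih ha ha'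
    obtain ⟨ℓ, hℓ, hassoc⟩ := h q hq (Dvd.intro _ rfl)
    obtain ⟨u, hu⟩ := hassoc
    obtain ⟨d, hd, hdu⟩ := unit_eq_C n (↑u⁻¹ : MvPolynomial (Fin n) ℂ) (Units.isUnit _)
    have hq' : q = C d * ℓ := by
      have : q * ↑u * ↑u⁻¹ = ℓ * ↑u⁻¹ := by rw [hu]
      rw [mul_assoc, Units.mul_inv, mul_one] at this
      rw [this, hdu]; ring
    refine ⟨d * c, mul_ne_zero hd hc, r + 1, Fin.cons ℓ f, ?_, ?_⟩
    · exact Fin.cases hℓ hf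
    · rw [Fin.prod_cons, hq']
      rw [map_mul]
      ring

theorem stmt_3' (n : ℕ) (hn : 1 ≤ n) (p : MvPolynomial (Fin n) ℂ)
    (hp : 0 < p.totalDegree)
    (hV : ∃ (k : ℕ) (m : Fin k → ℕ) (H : (i : Fin k) → Fin (m i) → Set (Fin n → ℂ)),
      (∀ i j, ((∃ a : Fin n, H i j = {x | x a = 0}) ∨
        (∃ a b : Fin n, a ≠ b ∧ H i j = {x | x a + x b = 0}) ∨
        (∃ a b : Fin n, a ≠ b ∧ H i j = {x | x a - x b = 0}))) ∧
      {x | MvPolynomial.eval x p = 0} = ⋃ i, ⋂ j, H i j) :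
    ∃ c : ℂ, c ≠ 0 ∧ ∃ (r : ℕ) (f : Fin r → MvPolynomial (Fin n) ℂ),
      (∀ t, ∃ k : ℕ,
        (∃ i, f t = MvPolynomial.X i ^ k) ∨
        (∃ i j, i ≠ j ∧ f t = (MvPolynomial.X i - MvPolynomial.X j) ^ k) ∨
        (∃ i j, i ≠ j ∧ f t = (MvPolynomial.X i + MvPolynomial.X j) ^ k)) ∧
      p = MvPolynomial.C c * ∏ t, f t := by
  classical
  obtain ⟨k, m, H, hH, hA⟩ := hV
  have hp0 : p ≠ 0 := by rintro rfl; simp at hp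
  by_cases hm : ∀ i, 0 < m i
  swap
  · push_neg at hm
    obtain ⟨i, hi⟩ := hm
    have hi0 : IsEmpty (Fin (m i)) := by
      rw [Nat.le_zero] at hi
      rw [hi]
      exact Fin.isEmpty'
    exfalso
    have hall : ∀ x : Fin n → ℂ, eval x p = 0 := by
      intro x
      have hx : x ∈ ⋃ i, ⋂ j, H i j :=
        Set.mem_iUnion.mpr ⟨i, by rw [Set.iInter_of_empty]; trivial⟩
      rw [← hA] at hx
      exact hx
    have : p = 0 := by
      apply MvPolynomial.funext (q := 0)
      intro x
      simp [hall x]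
    rw [this] at hp
    simp at hp
  · have choice : ∀ i : Fin k, ∃ ℓ : MvPolynomial (Fin n) ℂ, Good n ℓ ∧
        (∀ x, x ∈ H i ⟨0, hm i⟩ → eval x ℓ = 0) := by
      intro i
      rcases hH i ⟨0, hm i⟩ with ⟨a, hHa⟩ | ⟨a, b, hab, hHa⟩ | ⟨a, b, hab, hHa⟩
      · exact ⟨X a, Or.inl ⟨a, rfl⟩, fun x hx => by rw [hHa] at hx; simpa using hx⟩
      · exact ⟨X a + X b, Or.inr (Or.inr ⟨a, b, hab, rfl⟩),
          fun x hx => by rw [hHa] at hx; simpa using hx⟩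
      · exact ⟨X a - X b, Or.inr (Or.inl ⟨a, b, hab, rfl⟩),
          fun x hx => by rw [hHa] at hx; simpa using hx⟩
    choose ℓ hℓg hℓz using choice
    have hmem : (∏ i : Fin k, ℓ i) ∈ vanishingIdeal ℂ (zeroLocus ℂ (Ideal.span {p})) := by
      rw [mem_vanishingIdeal_iff]
      intro x hx
      have hxp : eval x p = 0 := by
        rw [mem_zeroLocus_iff] at hx
        simpa [coe_aeval_eq_eval] using hx p (Ideal.subset_span rfl)
      have hx2 : x ∈ ⋃ i, ⋂ j, H i j := by rw [← hA]; exact hxp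
      obtain ⟨i, hxi⟩ := Set.mem_iUnion.mp hx2
      have hx0 : x ∈ H i ⟨0, hm i⟩ := Set.mem_iInter.mp hxi _
      rw [map_prod]
      exact Finset.prod_eq_zero (Finset.mem_univ i) (by simpa [coe_aeval_eq_eval] using hℓz i x hx0)
    rw [vanishingIdeal_zeroLocus_eq_radical, Ideal.mem_radical_iff] at hmem
    obtain ⟨N, hN⟩ := hmem
    rw [Ideal.mem_span_singleton] at hN
    obtain ⟨c, hc, r, f, hf, heq⟩ := factor_lemma p hp0 (by
      intro a ha hap
      have haq : a ∣ ∏ i : Fin k, ℓ i := ha.dvd_of_dvd_pow (hap.trans hN)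
      obtain ⟨i, _, hai⟩ := ha.exists_mem_finset_dvd haq
      exact ⟨ℓ i, hℓg i, ha.irreducible.associated_of_dvd (good_prime (hℓg i)).irreducible hai⟩)
    refine ⟨c, hc, r, f, ?_, heq⟩
    intro t
    refine ⟨1, ?_⟩
    rcases hf t with ⟨i, hfi⟩ | ⟨i, j, hij, hfi⟩ | ⟨i, j, hij, hfi⟩
    · exact Or.inl ⟨i, by rw [hfi, pow_one]⟩
    · exact Or.inr (Or.inl ⟨i, j, hij, by rw [hfi, pow_one]⟩)
    · exact Or.inr (Or.inr ⟨i, j, hij, by rw [hfi, pow_one]⟩)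

end Stmt3Aux


/-- An allowable hyperplane in `ℂⁿ`: one of `{x_i = 0}`, `{x_i + x_j = 0}`, `{x_i - x_j = 0}`. -/
def IsAllowableHyperplane (n : ℕ) (H : Set (Fin n → ℂ)) : Prop :=
  (∃ i : Fin n, H = {x | x i = 0}) ∨
  (∃ i j : Fin n, i ≠ j ∧ H = {x | x i + x j = 0}) ∨
  (∃ i j : Fin n, i ≠ j ∧ H = {x | x i - x j = 0})

/-- An allowable set: a finite union of finite intersections of allowable hyperplanes. -/
def IsAllowable (n : ℕ) (A : Set (Fin n → ℂ)) : Prop :=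
  ∃ (k : ℕ) (m : Fin k → ℕ) (H : (i : Fin k) → Fin (m i) → Set (Fin n → ℂ)),
    (∀ i j, IsAllowableHyperplane n (H i j)) ∧ A = ⋃ i, ⋂ j, H i j

/-- A nonconstant complex polynomial with allowable variety factors as a
constant times a product of powers of `x_i`, `x_i - x_j`, `x_i + x_j`. -/
theorem stmt_3 (n : ℕ) (hn : 1 ≤ n) (p : MvPolynomial (Fin n) ℂ)
    (hp : 0 < p.totalDegree)
    (hV : IsAllowable n {x | MvPolynomial.eval x p = 0}) :
    ∃ c : ℂ, c ≠ 0 ∧ ∃ (r : ℕ) (f : Fin r → MvPolynomial (Fin n) ℂ),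
      (∀ t, ∃ k : ℕ,
        (∃ i, f t = MvPolynomial.X i ^ k) ∨
        (∃ i j, i ≠ j ∧ f t = (MvPolynomial.X i - MvPolynomial.X j) ^ k) ∨
        (∃ i j, i ≠ j ∧ f t = (MvPolynomial.X i + MvPolynomial.X j) ^ k)) ∧
      p = MvPolynomial.C c * ∏ t, f t := by
  exact Stmt3Aux.stmt_3' n hn p hp hV
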